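/- Let S be a finite set of unit vectors in ℂ^m such that for all distinct x, y ∈ S, |x* y| ∈ {0, β} where 0 < β < 1. For each x ∈ S define v_x = x ⊗ x ⊗ conj(x) ∈ ℂ^{m³}. Then the vectors {v_x : x ∈ S} are linearly independent; in particular |S| ≤ dim(span{v_x : x ∈ S}). -/

import Mathlib

lemma inner_v_eq (m : ℕ) (v : EuclideanSpace ℂ (Fin m) → EuclideanSpace ℂ (Fin m × Fin m × Fin m))
    (hv : ∀ x, ∀ p : Fin m × Fin m × Fin m,
      v x p = x p.1 * x p.2.1 * starRingEnd ℂ (x p.2.2)) (x y : EuclideanSpace ℂ (Fin m)) :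
    (inner ℂ (v x) (v y) : ℂ) = (inner ℂ x y : ℂ) * (inner ℂ x y : ℂ) * starRingEnd ℂ (inner ℂ x y : ℂ) := by
  simp only [PiLp.inner_apply, RCLike.inner_apply, hv, map_mul, map_sum,
    starRingEnd_self_apply]
  rw [Fintype.sum_prod_type, Finset.sum_mul_sum, Finset.sum_mul_sum]
  refine Finset.sum_congr rfl fun i _ => ?_
  rw [Fintype.sum_prod_type, Finset.sum_comm]
  refine Finset.sum_congr rfl fun k _ => ?_
  rw [Finset.sum_mul]
  refine Finset.sum_congr rfl fun j _ => ?_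
  ring

theorem stmt_2 (m : ℕ) (β : ℝ) (hβ : 0 < β) (hβ1 : β < 1)
    (S : Finset (EuclideanSpace ℂ (Fin m)))
    (hunit : ∀ x ∈ S, ‖x‖ = 1)
    (hang : ∀ x ∈ S, ∀ y ∈ S, x ≠ y →
      ‖(inner ℂ x y : ℂ)‖ = 0 ∨ ‖(inner ℂ x y : ℂ)‖ = β)
    (v : EuclideanSpace ℂ (Fin m) → EuclideanSpace ℂ (Fin m × Fin m × Fin m))
    (hv : ∀ x, ∀ p : Fin m × Fin m × Fin m,
      v x p = x p.1 * x p.2.1 * starRingEnd ℂ (x p.2.2)) :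
    LinearIndependent ℂ (fun x : S => v x) ∧
      S.card ≤ Module.finrank ℂ (Submodule.span ℂ (v '' S)) := by
  classical
  have key : ∀ x ∈ S, ∀ y ∈ S, (inner ℂ (v x) (v y) : ℂ) =
      (if x = y then ((1:ℂ) - (β:ℂ)^2) else 0) + (β:ℂ)^2 * (inner ℂ x y : ℂ) := by
    intro x hx y hy
    rw [inner_v_eq m v hv]
    rcases eq_or_ne x y with rfl | hne
    · have h1 : (inner ℂ x x : ℂ) = 1 := by
        rw [inner_self_eq_norm_sq_to_K, hunit x hx]; norm_num
      rw [h1, if_pos rfl]; simp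
    · rw [if_neg hne]
      rcases hang x hx y hy hne with h | h
      · have : (inner ℂ x y : ℂ) = 0 := norm_eq_zero.mp h
        rw [this]; ring
      · have hmc : (inner ℂ x y : ℂ) * starRingEnd ℂ (inner ℂ x y : ℂ) = (β:ℂ)^2 := by
          rw [Complex.mul_conj, Complex.normSq_eq_norm_sq]
          rw [show ‖(inner ℂ x y : ℂ)‖ = β from h]; norm_cast
        rw [mul_assoc, hmc]; ring
  have hli : LinearIndependent ℂ (fun x : S => v x) := by
    rw [Fintype.linearIndependent_iff]
    intro c hc
    -- from hc, inner ℂ (∑ c i • v i) with itself is 0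
    set w : EuclideanSpace ℂ (Fin m) := ∑ i : S, c i • (i : EuclideanSpace ℂ (Fin m)) with hw
    have h0 : (0:ℂ) = ((1:ℂ) - (β:ℂ)^2) * ∑ i : S, (starRingEnd ℂ (c i)) * c i
        + (β:ℂ)^2 * (inner ℂ w w : ℂ) := by
      have : (inner ℂ (∑ i : S, c i • v i) (∑ i : S, c i • v i) : ℂ) = 0 := by
        rw [hc, inner_zero_right]
      rw [← this]
      rw [sum_inner]
      simp_rw [inner_sum, inner_smul_left, inner_smul_right]
      rw [hw, sum_inner]
      simp_rw [inner_sum, inner_smul_left, inner_smul_right]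
      rw [Finset.mul_sum, Finset.mul_sum, ← Finset.sum_add_distrib]
      refine Finset.sum_congr rfl fun i _ => ?_
      rw [show ((1:ℂ) - (β:ℂ)^2) * (starRingEnd ℂ (c i) * c i) =
        ∑ j : S, if j = i then ((1:ℂ) - (β:ℂ)^2) * (starRingEnd ℂ (c i) * c i) else 0 by
          rw [Finset.sum_ite_eq']; simp]
      rw [Finset.mul_sum, ← Finset.sum_add_distrib]
      refine Finset.sum_congr rfl fun j _ => ?_
      rw [key i i.2 j j.2]
      rcases eq_or_ne (i:EuclideanSpace ℂ (Fin m)) (j:EuclideanSpace ℂ (Fin m)) with he | he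
      · have : i = j := Subtype.ext he
        subst this
        rw [if_pos rfl, if_pos rfl]; ring
      · rw [if_neg he, if_neg (fun hji => he (by rw [hji]))]
        ring
    -- convert to reals
    have hsum : ∑ i : S, (starRingEnd ℂ (c i)) * c i = ((∑ i : S, ‖c i‖^2 : ℝ) : ℂ) := by
      push_cast
      refine Finset.sum_congr rfl fun i _ => ?_
      rw [Complex.conj_mul']
    have hww : (inner ℂ w w : ℂ) = ((‖w‖^2 : ℝ) : ℂ) := by
      rw [inner_self_eq_norm_sq_to_K]; norm_cast
    rw [hsum, hww] at h0
    have h0' : (0:ℝ) = (1 - β^2) * (∑ i : S, ‖c i‖^2) + β^2 * ‖w‖^2 := by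
      exact_mod_cast h0
    have hA : (0:ℝ) ≤ ∑ i : S, ‖c i‖^2 := Finset.sum_nonneg fun i _ => sq_nonneg _
    have hB : (0:ℝ) ≤ ‖w‖^2 := sq_nonneg _
    have hβ2 : (0:ℝ) < 1 - β^2 := by nlinarith
    have hAz : ∑ i : S, ‖c i‖^2 = 0 := by nlinarith [mul_nonneg (sq_nonneg β) hB]
    intro i
    have : ‖c i‖^2 = 0 := by
      have := Finset.sum_eq_zero_iff_of_nonneg (fun i _ => sq_nonneg ‖c i‖) |>.mp hAz i (Finset.mem_univ i)
      exact this
    have : ‖c i‖ = 0 := by nlinarith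
    exact norm_eq_zero.mp this
  refine ⟨hli, ?_⟩
  have himg : v '' (S : Set (EuclideanSpace ℂ (Fin m))) = Set.range (fun x : S => v x) := by
    exact Set.image_eq_range v S
  rw [himg, finrank_span_eq_card hli]
  simp
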